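/- arXiv:1005.0404 — 9 statements merged into one kernel-verified Lean document; each statement's English description precedes it below -/
import Mathlib

section
/- Let m11, m12, m22, n11, n21, n22 be nonnegative real numbers and let (R1, R2) be a pair of nonnegative real numbers satisfying the ten inequalities: R1 ≤ m11; R2 ≤ max(m12, m22); R1 + R2 ≤ max(m11, m12) + (m22 − m12)^+; R2 ≤ m12 + n22; R1 + R2 ≤ m22 + max(n11, n21); R1 + R2 ≤ max(m11, m12) + n22; R1 ≤ n11; R2 ≤ max(n21, n22); R2 ≤ m22 + n21; R1 + R2 ≤ max(n21, n22) + (n11 − n21)^+. Then R1 ≤ min(m11, n11), and with r = R1 all four of the following hold: R2 ≤ max(m'12(r), m'22(r)); R2 ≤ m'22(r) + n'21(r); R2 ≤ m'12(r) + n'22(r); R2 ≤ max(n'21(r), n'22(r)). -/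
set_option maxHeartbeats 2000000


theorem dzs_decomposition
    (m11 m12 m22 n11 n21 n22 R1 R2 : ℝ)
    (hm11 : 0 ≤ m11) (hm12 : 0 ≤ m12) (hm22 : 0 ≤ m22)
    (hn11 : 0 ≤ n11) (hn21 : 0 ≤ n21) (hn22 : 0 ≤ n22)
    (hR1 : 0 ≤ R1) (hR2 : 0 ≤ R2)
    (h1 : R1 ≤ m11)
    (h2 : R2 ≤ max m12 m22)
    (h3 : R1 + R2 ≤ max m11 m12 + max (m22 - m12) 0)
    (h4 : R2 ≤ m12 + n22)
    (h5 : R1 + R2 ≤ m22 + max n11 n21)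
    (h6 : R1 + R2 ≤ max m11 m12 + n22)
    (h7 : R1 ≤ n11)
    (h8 : R2 ≤ max n21 n22)
    (h9 : R2 ≤ m22 + n21)
    (h10 : R1 + R2 ≤ max n21 n22 + max (n11 - n21) 0) :
    R1 ≤ min m11 n11 ∧
    R2 ≤ max (min (max m11 m12 - R1) m12)
             (min (max m11 m12 + max (m22 - m12) 0 - R1) m22) ∧
    R2 ≤ min (max m11 m12 + max (m22 - m12) 0 - R1) m22
           + min (max n11 n21 - R1) n21 ∧
    R2 ≤ min (max m11 m12 - R1) m12
           + min (max n11 n21 + max (n22 - n21) 0 - R1) n22 ∧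
    R2 ≤ max (min (max n11 n21 - R1) n21)
             (min (max n11 n21 + max (n22 - n21) 0 - R1) n22) := by
  obtain ⟨e1,f1⟩|⟨e1,f1⟩ := max_cases m11 m12 <;>
  obtain ⟨e2,f2⟩|⟨e2,f2⟩ := max_cases m12 m22 <;>
  obtain ⟨e3,f3⟩|⟨e3,f3⟩ := max_cases (m22-m12) (0:ℝ) <;>
  obtain ⟨e4,f4⟩|⟨e4,f4⟩ := max_cases n11 n21 <;>
  obtain ⟨e5,f5⟩|⟨e5,f5⟩ := max_cases n21 n22 <;>
  obtain ⟨e6,f6⟩|⟨e6,f6⟩ := max_cases (n22-n21) (0:ℝ) <;>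
  obtain ⟨e7,f7⟩|⟨e7,f7⟩ := max_cases (n11-n21) (0:ℝ) <;>
  simp only [e1,e2,e3,e4,e5,e6,e7] at * <;>
  refine ⟨le_min h1 h7, ?_, ?_, ?_, ?_⟩ <;>
  simp only [le_max_iff, le_min_iff, min_def] <;>
  split_ifs <;>
  first
    | linarith
    | (left; linarith)
    | (right; linarith)
    | (constructor <;> linarith)
    | (left; constructor <;> linarith)
    | (right; constructor <;> linarith)
end

section
/- Let m11, m12, m22 and R1, R2 be nonnegative real numbers such that R2 ≤ max(m12, m22) and R1 + R2 ≤ max(m11, m12) + (m22 − m12)^+. Then R2 ≤ max(m'12(R1), m'22(R1)). -/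
theorem dzs_decomposition_first_bound
    (m11 m12 m22 R1 R2 : ℝ)
    (hm11 : 0 ≤ m11) (hm12 : 0 ≤ m12) (hm22 : 0 ≤ m22)
    (hR1 : 0 ≤ R1) (hR2 : 0 ≤ R2)
    (h2 : R2 ≤ max m12 m22)
    (h3 : R1 + R2 ≤ max m11 m12 + max (m22 - m12) 0) :
    R2 ≤ max (min (max m11 m12 - R1) m12)
             (min (max m11 m12 + max (m22 - m12) 0 - R1) m22) := by
  rcases le_max_iff.mp h2 with h | h
  · rcases le_total R2 m22 with hc | hc
    · exact le_max_of_le_right (le_min (by linarith) hc)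
    · have hP : max (m22 - m12) 0 = 0 := max_eq_right (by linarith)
      rw [hP] at h3
      exact le_max_of_le_left (le_min
        (by have := le_max_right m11 m12; linarith) h)
  · exact le_max_of_le_right (le_min (by linarith) h)
end

section
/- Let m11, m12, m22, n11, n21 and R1, R2 be nonnegative real numbers such that R1 ≤ m11, R1 ≤ n11, R1 + R2 ≤ max(m11, m12) + (m22 − m12)^+, R1 + R2 ≤ m22 + max(n11, n21), and R2 ≤ m22 + n21. Then R2 ≤ m'22(R1) + n'21(R1). -/
theorem dzs_decomposition_second_bound
    (m11 m12 m22 n11 n21 R1 R2 : ℝ)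
    (hm11 : 0 ≤ m11) (hm12 : 0 ≤ m12) (hm22 : 0 ≤ m22)
    (hn11 : 0 ≤ n11) (hn21 : 0 ≤ n21)
    (hR1 : 0 ≤ R1) (hR2 : 0 ≤ R2)
    (h1 : R1 ≤ m11)
    (h7 : R1 ≤ n11)
    (h3 : R1 + R2 ≤ max m11 m12 + max (m22 - m12) 0)
    (h5 : R1 + R2 ≤ m22 + max n11 n21)
    (h9 : R2 ≤ m22 + n21) :
    R2 ≤ min (max m11 m12 + max (m22 - m12) 0 - R1) m22
           + min (max n11 n21 - R1) n21 := by
  rw [min_def, min_def]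
  split_ifs <;>
    linarith [le_max_left m11 m12, le_max_left n11 n21,
      le_max_left (m22 - m12) 0, le_max_right (m22 - m12) 0]
end

section
/- Let m11, m12, n11, n21, n22 and R1, R2 be nonnegative real numbers such that R1 ≤ m11, R1 ≤ n11, R2 ≤ m12 + n22, R1 + R2 ≤ max(m11, m12) + n22, and R1 + R2 ≤ max(n21, n22) + (n11 − n21)^+. Then R2 ≤ m'12(R1) + n'22(R1). -/
theorem dzs_decomposition_third_bound
    (m11 m12 n11 n21 n22 R1 R2 : ℝ)
    (hm11 : 0 ≤ m11) (hm12 : 0 ≤ m12)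
    (hn11 : 0 ≤ n11) (hn21 : 0 ≤ n21) (hn22 : 0 ≤ n22)
    (hR1 : 0 ≤ R1) (hR2 : 0 ≤ R2)
    (h1 : R1 ≤ m11)
    (h7 : R1 ≤ n11)
    (h4 : R2 ≤ m12 + n22)
    (h6 : R1 + R2 ≤ max m11 m12 + n22)
    (h10 : R1 + R2 ≤ max n21 n22 + max (n11 - n21) 0) :
    R2 ≤ min (max m11 m12 - R1) m12
           + min (max n11 n21 + max (n22 - n21) 0 - R1) n22 := by
  rcases le_total m11 m12 with a|a <;>
  rcases le_total n11 n21 with b|b <;>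
  rcases le_total n21 n22 with c|c <;>
  rcases (le_total (n11-n21) 0) with d|d <;>
  simp_all [max_eq_left, max_eq_right, le_min_iff, min_def] <;>
  (try split_ifs) <;> linarith
end

section
/- Let n11, n21, n22 and R1, R2 be nonnegative real numbers such that R2 ≤ max(n21, n22) and R1 + R2 ≤ max(n21, n22) + (n11 − n21)^+. Then R2 ≤ max(n'21(R1), n'22(R1)). -/
theorem dzs_decomposition_fourth_bound
    (n11 n21 n22 R1 R2 : ℝ)
    (hn11 : 0 ≤ n11) (hn21 : 0 ≤ n21) (hn22 : 0 ≤ n22)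
    (hR1 : 0 ≤ R1) (hR2 : 0 ≤ R2)
    (h8 : R2 ≤ max n21 n22)
    (h10 : R1 + R2 ≤ max n21 n22 + max (n11 - n21) 0) :
    R2 ≤ max (min (max n11 n21 - R1) n21)
             (min (max n11 n21 + max (n22 - n21) 0 - R1) n22) := by
  have hM : max n11 n21 - n21 = max (n11 - n21) 0 := by
    rcases le_total n11 n21 with h | h <;>
      simp [max_eq_left, max_eq_right, h, sub_nonpos.2, sub_nonneg.2] <;> linarith
  rcases le_total n21 n22 with h1 | h1
  · refine le_max_of_le_right (le_min ?_ ?_)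
    · rw [max_eq_right h1] at h10
      rw [max_eq_left (by linarith : (0:ℝ) ≤ n22 - n21)]
      linarith
    · rw [max_eq_right h1] at h8; exact h8
  · refine le_max_of_le_left (le_min ?_ ?_)
    · rw [max_eq_left h1] at h10; linarith
    · rw [max_eq_left h1] at h8; exact h8
end

section
/- Let m11, m12, m22, n11, n12, n22 be nonnegative real numbers. Define λm = min(m11, min(m12, m22)), μm = max(max(m11, m12), max(m22, m11 + m22 − m12)), λn = min(n11, min(n12, n22)), and μn = max(max(n11, n12), max(n22, n11 + n22 − n12)). Then for nonnegative reals R1, R2, the following are equivalent: (i) R1 ≤ m11, R2 ≤ m22, R1 ≤ n11, R2 ≤ n22, R1 + R2 ≤ max(m11, m12) + (m22 − m12)^+ + n12, and R1 + R2 ≤ max(n11, n12) + (n22 − n12)^+ + m12; (ii) there exist nonnegative reals Υ0, Υ1, Υ2 with R1 = Υ0 + Υ1, R2 = Υ0 + Υ2, Υ0 ≤ min(λm, λn), Υ0 + Υ1 ≤ min(m11, n11), Υ0 + Υ2 ≤ min(m22, n22), and Υ0 + Υ1 + Υ2 ≤ min(μm, μn). -/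
lemma dzz_aux (a b c : ℝ) :
    max (max a b) (max c (a + c - b)) = max a b + max (c - b) 0 := by
  rcases le_total c b with h | h <;> rcases le_total a b with h2 | h2 <;>
    simp only [max_def] <;> split_ifs <;> linarith

theorem dzz_fourier_motzkin
    (m11 m12 m22 n11 n12 n22 : ℝ)
    (hm11 : 0 ≤ m11) (hm12 : 0 ≤ m12) (hm22 : 0 ≤ m22)
    (hn11 : 0 ≤ n11) (hn12 : 0 ≤ n12) (hn22 : 0 ≤ n22)
    (R1 R2 : ℝ) (hR1 : 0 ≤ R1) (hR2 : 0 ≤ R2) :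
    (R1 ≤ m11 ∧ R2 ≤ m22 ∧ R1 ≤ n11 ∧ R2 ≤ n22 ∧
      R1 + R2 ≤ max m11 m12 + max (m22 - m12) 0 + n12 ∧
      R1 + R2 ≤ max n11 n12 + max (n22 - n12) 0 + m12) ↔
    (∃ Y0 Y1 Y2 : ℝ, 0 ≤ Y0 ∧ 0 ≤ Y1 ∧ 0 ≤ Y2 ∧
      R1 = Y0 + Y1 ∧ R2 = Y0 + Y2 ∧
      Y0 ≤ min (min m11 (min m12 m22)) (min n11 (min n12 n22)) ∧
      Y0 + Y1 ≤ min m11 n11 ∧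
      Y0 + Y2 ≤ min m22 n22 ∧
      Y0 + Y1 + Y2 ≤ min (max (max m11 m12) (max m22 (m11 + m22 - m12)))
                         (max (max n11 n12) (max n22 (n11 + n22 - n12)))) := by
  set μ1 := max (max m11 m12) (max m22 (m11 + m22 - m12)) with hμ1
  set μ2 := max (max n11 n12) (max n22 (n11 + n22 - n12)) with hμ2
  have A1 : m11 ≤ μ1 := le_trans (le_max_left _ _) (le_max_left _ _)
  have A2 : m22 ≤ μ1 := le_trans (le_max_left _ _) (le_max_right _ _)
  have A3 : m11 + m22 - m12 ≤ μ1 := le_trans (le_max_right _ _) (le_max_right _ _)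
  have B1 : n11 ≤ μ2 := le_trans (le_max_left _ _) (le_max_left _ _)
  have B2 : n22 ≤ μ2 := le_trans (le_max_left _ _) (le_max_right _ _)
  have B3 : n11 + n22 - n12 ≤ μ2 := le_trans (le_max_right _ _) (le_max_right _ _)
  have eμ1 : μ1 = max m11 m12 + max (m22 - m12) 0 := dzz_aux m11 m12 m22
  have eμ2 : μ2 = max n11 n12 + max (n22 - n12) 0 := dzz_aux n11 n12 n22
  constructor
  · rintro ⟨h1, h2, h3, h4, h5, h6⟩
    rw [← eμ1] at h5
    rw [← eμ2] at h6
    rcases le_total μ1 μ2 with hc | hc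
    · refine ⟨max 0 (R1 + R2 - μ1), R1 - max 0 (R1 + R2 - μ1),
        R2 - max 0 (R1 + R2 - μ1), le_max_left _ _, ?_, ?_, by ring, by ring, ?_, ?_, ?_, ?_⟩
      · have := max_le hR1 (show R1 + R2 - μ1 ≤ R1 by linarith)
        linarith
      · have := max_le hR2 (show R1 + R2 - μ1 ≤ R2 by linarith)
        linarith
      · refine le_min (le_min ?_ (le_min ?_ ?_)) (le_min ?_ (le_min ?_ ?_)) <;>
          exact max_le (by assumption) (by linarith)
      · exact le_min (by linarith) (by linarith)
      · exact le_min (by linarith) (by linarith)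
      · have := le_max_right 0 (R1 + R2 - μ1)
        exact le_min (by linarith) (by linarith)
    · refine ⟨max 0 (R1 + R2 - μ2), R1 - max 0 (R1 + R2 - μ2),
        R2 - max 0 (R1 + R2 - μ2), le_max_left _ _, ?_, ?_, by ring, by ring, ?_, ?_, ?_, ?_⟩
      · have := max_le hR1 (show R1 + R2 - μ2 ≤ R1 by linarith)
        linarith
      · have := max_le hR2 (show R1 + R2 - μ2 ≤ R2 by linarith)
        linarith
      · refine le_min (le_min ?_ (le_min ?_ ?_)) (le_min ?_ (le_min ?_ ?_)) <;>
          exact max_le (by assumption) (by linarith)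
      · exact le_min (by linarith) (by linarith)
      · exact le_min (by linarith) (by linarith)
      · have := le_max_right 0 (R1 + R2 - μ2)
        exact le_min (by linarith) (by linarith)
  · rintro ⟨Y0, Y1, Y2, h0, hy1, hy2, e1, e2, c0, c1, c2, c3⟩
    simp only [le_min_iff] at c0 c1 c2 c3
    obtain ⟨⟨d1, d2, d3⟩, d4, d5, d6⟩ := c0
    refine ⟨by linarith [c1.1], by linarith [c2.1], by linarith [c1.2],
      by linarith [c2.2], ?_, ?_⟩
    · rw [← eμ1]
      linarith [c3.1]
    · rw [← eμ2]
      linarith [c3.2]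
end

section
/- For all real numbers g11, g12, g22 with g11 ≥ 1, g12 ≥ 1, and g22 ≥ 1, one has (1/2)·log₂(1 + g11 + g12) + (1/2)·log₂(1 + g22/g12) ≤ (1/2)·log₂(max{g11, g12, g22, g11·g22/g12}) + (1/2)·log₂ 6. Equivalently, (1 + g11 + g12)·(1 + g22/g12) ≤ 6·max{g11, g12, g22, g11·g22/g12}. -/
theorem gzz_gap_bound (g11 g12 g22 : ℝ)
    (h11 : 1 ≤ g11) (h12 : 1 ≤ g12) (h22 : 1 ≤ g22) :
    (1/2) * Real.logb 2 (1 + g11 + g12) + (1/2) * Real.logb 2 (1 + g22 / g12)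
      ≤ (1/2) * Real.logb 2 (max (max g11 g12) (max g22 (g11 * g22 / g12)))
        + (1/2) * Real.logb 2 6 := by
  set M : ℝ := max (max g11 g12) (max g22 (g11 * g22 / g12)) with hMdef
  have h12pos : (0:ℝ) < g12 := lt_of_lt_of_le one_pos h12
  have hM1 : (1:ℝ) ≤ M := le_trans h11 (le_trans (le_max_left _ _) (le_max_left _ _))
  have hA : g11 ≤ M := le_trans (le_max_left _ _) (le_max_left _ _)
  have hB : g12 ≤ M := le_trans (le_max_right _ _) (le_max_left _ _)
  have hC : g22 ≤ M := le_trans (le_max_left _ _) (le_max_right _ _)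
  have hD : g11 * g22 / g12 ≤ M := le_trans (le_max_right _ _) (le_max_right _ _)
  have hdiv : g22 / g12 ≤ g22 := by
    rw [div_le_iff₀ h12pos]
    nlinarith
  have key : (1 + g11 + g12) * (1 + g22 / g12) ≤ 6 * M := by
    have hexp : (1 + g11 + g12) * (1 + g22 / g12)
        = 1 + g11 + g12 + g22 / g12 + g11 * g22 / g12 + g22 := by
      field_simp; ring
    rw [hexp]
    linarith [le_trans hdiv hC]
  have hp1 : (0:ℝ) < 1 + g11 + g12 := by linarith
  have hp2 : (0:ℝ) < 1 + g22 / g12 := by positivity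
  have hlog : Real.logb 2 ((1 + g11 + g12) * (1 + g22 / g12)) ≤ Real.logb 2 (6 * M) :=
    Real.logb_le_logb_of_le (by norm_num) (by positivity) key
  rw [Real.logb_mul (ne_of_gt hp1) (ne_of_gt hp2),
      Real.logb_mul (by norm_num) (by positivity)] at hlog
  linarith
end

section
/- Let q, n11, n21 be natural numbers with n11 ≤ q and n21 ≤ q, and let J be the q×q down-shift matrix over 𝔽₂ (J(i, j) = 1 iff i = j + 1). Then the 2q×q matrix obtained by stacking J^(q−n11) on top of J^(q−n21) (vertical concatenation) has rank equal to max(n11, n21) over 𝔽₂. -/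
open Matrix

section Aux

variable {q : ℕ} (J : Matrix (Fin q) (Fin q) (ZMod 2))
  (hJ : ∀ i j : Fin q, J i j = if (i : ℕ) = (j : ℕ) + 1 then 1 else 0)

include hJ in
lemma Jpow_apply (k : ℕ) (i j : Fin q) :
    (J ^ k) i j = if (i : ℕ) = (j : ℕ) + k then 1 else 0 := by
  induction k generalizing i j with
  | zero =>
    simp only [pow_zero, Matrix.one_apply, Nat.add_zero]
    exact if_congr (Fin.val_eq_val i j).symm rfl rfl
  | succ k ih =>
    rw [pow_succ, Matrix.mul_apply]
    by_cases hjq : (j : ℕ) + 1 < q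
    · rw [Finset.sum_eq_single (⟨(j : ℕ) + 1, hjq⟩ : Fin q)]
      · rw [ih, hJ]
        simp only [Fin.val_mk, if_true, mul_one]
        exact if_congr (by omega) rfl rfl
      · intro l _ hl
        rw [hJ]
        have : ¬ ((l : ℕ) = (j : ℕ) + 1) := fun h => hl (Fin.ext h)
        rw [if_neg this, mul_zero]
      · intro h; exact absurd (Finset.mem_univ _) h
    · rw [Finset.sum_eq_zero, eq_comm, if_neg]
      · omega
      · intro l _
        rw [hJ, if_neg (by omega), mul_zero]

include hJ in
lemma rank_Jpow (k : ℕ) : (J ^ k).rank = q - k := by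
  set D : Matrix (Fin q) (Fin q) (ZMod 2) :=
    Matrix.diagonal (fun j : Fin q => if (j : ℕ) + k < q then (1 : ZMod 2) else 0) with hD
  have hTD : (J ^ k)ᵀ * (J ^ k) = D := by
    ext j j'
    rw [Matrix.mul_apply]
    simp only [Matrix.transpose_apply]
    by_cases hjk : (j : ℕ) + k < q
    · rw [Finset.sum_eq_single (⟨(j : ℕ) + k, hjk⟩ : Fin q)]
      · rw [Jpow_apply J hJ, Jpow_apply J hJ, if_pos rfl, one_mul, hD,
          Matrix.diagonal_apply]
        by_cases h : j = j'
        · subst h; simp [hjk]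
        · rw [if_neg (fun hh : (j : ℕ) + k = (j' : ℕ) + k => h (Fin.ext (by omega))),
            if_neg h]
      · intro l _ hl
        rw [Jpow_apply J hJ,
          if_neg (fun h : (l : ℕ) = (j : ℕ) + k => hl (Fin.ext h)), zero_mul]
      · intro h; exact absurd (Finset.mem_univ _) h
    · rw [Finset.sum_eq_zero, hD, Matrix.diagonal_apply, eq_comm]
      · rcases eq_or_ne j j' with h | h
        · subst h; simp [hjk]
        · simp [h]
      · intro l _
        rw [Jpow_apply J hJ, if_neg (by omega), zero_mul]
  have hJD : (J ^ k) * D = J ^ k := by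
    ext i j
    rw [hD, Matrix.mul_diagonal]
    by_cases hjk : (j : ℕ) + k < q
    · rw [if_pos hjk, mul_one]
    · rw [if_neg hjk, mul_zero, Jpow_apply J hJ, if_neg (by omega)]
  have hrD : D.rank = q - k := by
    rw [hD, Matrix.rank_diagonal]
    have e : {j : Fin q // (if (j : ℕ) + k < q then (1 : ZMod 2) else 0) ≠ 0} ≃ Fin (q - k) :=
      { toFun := fun j => ⟨(j.1 : ℕ), by
          have := j.2
          by_cases h : (j.1 : ℕ) + k < q
          · omega
          · simp [h] at this⟩
        invFun := fun a => ⟨⟨(a : ℕ), by omega⟩, by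
          have : (a : ℕ) + k < q := by omega
          simp [this]⟩
        left_inv := fun j => Subtype.ext (Fin.ext rfl)
        right_inv := fun a => Fin.ext rfl }
    rw [Fintype.card_congr e, Fintype.card_fin]
  refine le_antisymm ?_ ?_
  · calc (J ^ k).rank = ((J ^ k) * D).rank := by rw [hJD]
    _ ≤ D.rank := Matrix.rank_mul_le_right _ _
    _ = q - k := hrD
  · calc (q - k : ℕ) = D.rank := hrD.symm
    _ = ((J ^ k)ᵀ * (J ^ k)).rank := by rw [hTD]
    _ ≤ (J ^ k).rank := Matrix.rank_mul_le_right _ _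

include hJ in
lemma rank_fromRows_aux {n11 n21 : ℕ} (h1 : n11 ≤ q) (h21 : n21 ≤ n11) :
    (Matrix.fromRows (J ^ (q - n11)) (J ^ (q - n21))).rank = n11 := by
  set k := q - n11 with hk
  have hk2 : q - n21 = (q - n21 - k) + k := by omega
  refine le_antisymm ?_ ?_
  · have hfac : Matrix.fromRows (J ^ k) (J ^ (q - n21)) =
        Matrix.fromRows (1 : Matrix (Fin q) (Fin q) (ZMod 2)) (J ^ (q - n21 - k)) * (J ^ k) := by
      rw [Matrix.fromRows_mul, one_mul, ← pow_add, ← hk2]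
    calc (Matrix.fromRows (J ^ k) (J ^ (q - n21))).rank
        ≤ (J ^ k).rank := by rw [hfac]; exact Matrix.rank_mul_le_right _ _
      _ = n11 := by rw [rank_Jpow J hJ]; omega
  · have hproj : Matrix.fromCols (1 : Matrix (Fin q) (Fin q) (ZMod 2)) (0 : Matrix (Fin q) (Fin q) (ZMod 2)) *
        Matrix.fromRows (J ^ k) (J ^ (q - n21)) = J ^ k := by
      rw [Matrix.fromCols_mul_fromRows]
      simp
    calc (n11 : ℕ) = (J ^ k).rank := by rw [rank_Jpow J hJ]; omega
      _ = (Matrix.fromCols (1 : Matrix (Fin q) (Fin q) (ZMod 2)) (0 : Matrix (Fin q) (Fin q) (ZMod 2)) *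
            Matrix.fromRows (J ^ k) (J ^ (q - n21))).rank := by rw [hproj]
      _ ≤ (Matrix.fromRows (J ^ k) (J ^ (q - n21))).rank := Matrix.rank_mul_le_right _ _

lemma rank_submatrix_row_equiv {q : ℕ} (M : Matrix (Fin q ⊕ Fin q) (Fin q) (ZMod 2)) :
    (M.submatrix ⇑(Equiv.sumComm (Fin q) (Fin q)) id).rank = M.rank := by
  rw [Matrix.rank, Matrix.rank,
    show (M.submatrix ⇑(Equiv.sumComm (Fin q) (Fin q)) id) =
      M.submatrix ⇑(Equiv.sumComm (Fin q) (Fin q)) ⇑(Equiv.refl (Fin q)) from rfl,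
    Matrix.mulVecLin_submatrix,
    show LinearMap.funLeft (ZMod 2) (ZMod 2) ⇑(Equiv.refl (Fin q)).symm = LinearMap.id from rfl,
    LinearMap.comp_id, LinearMap.range_comp,
    show LinearMap.funLeft (ZMod 2) (ZMod 2) ⇑(Equiv.sumComm (Fin q) (Fin q)) =
      (LinearEquiv.funCongrLeft (ZMod 2) (ZMod 2) (Equiv.sumComm (Fin q) (Fin q)) :
        ((Fin q ⊕ Fin q) → ZMod 2) →ₗ[ZMod 2] ((Fin q ⊕ Fin q) → ZMod 2)) from rfl,
    ]
  exact LinearEquiv.finrank_map_eq _ _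

end Aux

theorem rank_vertical_concat_shift (q n11 n21 : ℕ)
    (h1 : n11 ≤ q) (h2 : n21 ≤ q)
    (J : Matrix (Fin q) (Fin q) (ZMod 2))
    (hJ : ∀ i j : Fin q, J i j = if (i : ℕ) = (j : ℕ) + 1 then 1 else 0) :
    (Matrix.fromRows (J ^ (q - n11)) (J ^ (q - n21))).rank = max n11 n21 := by
  rcases le_total n21 n11 with h | h
  · rw [max_eq_left h]
    exact rank_fromRows_aux J hJ h1 h
  · rw [max_eq_right h]
    have hswap : Matrix.fromRows (J ^ (q - n11)) (J ^ (q - n21)) =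
        (Matrix.fromRows (J ^ (q - n21)) (J ^ (q - n11))).submatrix
          (Equiv.sumComm (Fin q) (Fin q)) id := by
      ext i j
      cases i <;> rfl
    rw [hswap, rank_submatrix_row_equiv]
    exact rank_fromRows_aux J hJ h2 h
end

section
/- Let q, m11, m12, m22 be natural numbers with m11 ≤ q, m12 ≤ q, m22 ≤ q, and let J be the q×q down-shift matrix over 𝔽₂ (J(i, j) = 1 iff i = j + 1). Then the 2q×2q block matrix with block rows [J^(q−m11), J^(q−m12)] and [0, J^(q−m22)] (block upper-triangular, zero block in the lower-left) has rank equal to max(m11 + m22, m12) over 𝔽₂. -/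
open Matrix

namespace RBTS

/-- The `k`-fold down-shift matrix over `ZMod 2`. -/
def S (q k : ℕ) : Matrix (Fin q) (Fin q) (ZMod 2) :=
  Matrix.of fun i j => if (i : ℕ) = (j : ℕ) + k then 1 else 0

lemma S_mul (q k m : ℕ) : S q k * S q m = S q (m + k) := by
  ext i j
  simp only [Matrix.mul_apply, S, Matrix.of_apply]
  by_cases h : (j : ℕ) + m < q
  · rw [Finset.sum_eq_single (⟨(j : ℕ) + m, h⟩ : Fin q)]
    · by_cases hi : (i : ℕ) = (j : ℕ) + (m + k)
      · simp [hi, add_assoc]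
      · have h1 : ¬ ((i : ℕ) = (j : ℕ) + m + k) := by omega
        simp [hi, h1]
    · intro l _ hl
      have : ¬ ((l : ℕ) = (j : ℕ) + m) := fun hc => hl (Fin.ext hc)
      simp [this]
    · simp
  · have hz : ∀ l : Fin q, ¬ ((l : ℕ) = (j : ℕ) + m) := by
      intro l hc; exact h (hc ▸ l.isLt)
    rw [Finset.sum_eq_zero (fun l _ => by simp [hz l])]
    have : ¬ ((i : ℕ) = (j : ℕ) + (m + k)) := by have := i.isLt; omega
    simp [this]

lemma J_pow (q : ℕ) (J : Matrix (Fin q) (Fin q) (ZMod 2))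
    (hJ : ∀ i j : Fin q, J i j = if (i : ℕ) = (j : ℕ) + 1 then 1 else 0) (k : ℕ) :
    J ^ k = S q k := by
  induction k with
  | zero =>
    ext i j
    simp only [pow_zero, S, Matrix.of_apply, Matrix.one_apply, add_zero]
    by_cases h : i = j
    · simp [h]
    · have : ¬ ((i : ℕ) = (j : ℕ)) := fun hc => h (Fin.ext hc)
      simp [h, this]
  | succ n ih =>
    have hJ1 : J = S q 1 := by
      ext i j; rw [hJ i j]; simp [S]
    rw [pow_succ, ih, hJ1, S_mul, add_comm]

lemma add_self (m n : Type*) (X : Matrix m n (ZMod 2)) : X + X = 0 := by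
  ext i j
  simp only [Matrix.add_apply, Matrix.zero_apply]
  exact CharTwo.add_self_eq_zero _

/-- Rank of a matrix whose columns are either zero or standard basis vectors. -/
lemma rank_eq_card {m n : Type*} [Fintype m] [Fintype n] [DecidableEq m]
    (M : Matrix m n (ZMod 2)) (f : n → Option m)
    (hcol : ∀ j i, M i j = if f j = some i then 1 else 0) :
    M.rank = Nat.card {i : m // ∃ j, f j = some i} := by
  classical
  set s : Set m := {i | ∃ j, f j = some i} with hs
  set t : Set (m → ZMod 2) := (fun i => Pi.single i (1 : ZMod 2)) '' s with ht
  have hcolsome : ∀ j i, f j = some i → Mᵀ j = Pi.single i 1 := by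
    intro j i hfj
    funext i'
    rw [Matrix.transpose_apply, hcol j i', Pi.single_apply]
    by_cases h : i' = i
    · simp [h, hfj]
    · have hne : ¬ (f j = some i') := by
        rw [hfj]
        intro hc
        exact h (Option.some_inj.mp hc).symm
      rw [if_neg hne, if_neg h]
  have hspan : Submodule.span (ZMod 2) (Set.range Mᵀ) = Submodule.span (ZMod 2) t := by
    apply le_antisymm <;> rw [Submodule.span_le]
    · rintro _ ⟨j, rfl⟩
      cases hfj : f j with
      | none =>
        have hz : Mᵀ j = 0 := by
          funext i'
          rw [Matrix.transpose_apply, hcol j i', hfj]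
          simp
        rw [hz]; exact Submodule.zero_mem _
      | some i =>
        rw [hcolsome j i hfj]
        exact Submodule.subset_span ⟨i, ⟨j, hfj⟩, rfl⟩
    · rintro _ ⟨i, hi, rfl⟩
      obtain ⟨j, hfj⟩ := hi
      exact Submodule.subset_span ⟨j, hcolsome j i hfj⟩
  have hinj : Function.Injective (fun i : m => Pi.single i (1 : ZMod 2)) := by
    intro i i' h
    by_contra hne
    have h2 := congrFun h i
    simp only [Pi.single_apply, if_pos rfl] at h2
    rw [if_neg hne] at h2
    exact one_ne_zero h2
  have hli0 : LinearIndependent (ZMod 2) (fun i : m => Pi.single i (1 : ZMod 2)) := by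
    have h := (Pi.basisFun (ZMod 2) m).linearIndependent
    have hfun : ⇑(Pi.basisFun (ZMod 2) m) = fun i : m => Pi.single i (1 : ZMod 2) :=
      funext fun i => by simp
    rwa [hfun] at h
  have hli : LinearIndependent (ZMod 2) ((↑) : t → (m → ZMod 2)) :=
    LinearIndepOn.id_image (s := s) (hli0.comp (Subtype.val : s → m) Subtype.val_injective)
  haveI : Fintype t := Set.Finite.fintype (Set.toFinite t)
  rw [Matrix.rank_eq_finrank_span_cols, show Set.range M.col = Set.range Mᵀ from rfl, hspan, finrank_span_set_eq_card hli,
    Set.toFinset_card,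
    show Fintype.card t = Nat.card t from (Nat.card_eq_fintype_card).symm]
  exact Nat.card_congr (Equiv.Set.image _ s hinj).symm

lemma card_shift (q k : ℕ) : Nat.card {i : Fin q // k ≤ (i : ℕ)} = q - k := by
  have e : {i : Fin q // k ≤ (i : ℕ)} ≃ Fin (q - k) :=
    { toFun := fun x => ⟨(x.1 : ℕ) - k, by have := x.1.isLt; have := x.2; omega⟩
      invFun := fun y => ⟨⟨(y : ℕ) + k, by have := y.isLt; omega⟩, by simp⟩
      left_inv := by
        rintro ⟨i, hi⟩
        apply Subtype.ext; apply Fin.ext; simp; omega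
      right_inv := by
        intro y
        apply Fin.ext; simp }
  rw [Nat.card_congr e, Nat.card_eq_fintype_card, Fintype.card_fin]

lemma rank_S (q k : ℕ) : (S q k).rank = q - k := by
  classical
  rw [rank_eq_card (S q k)
      (fun j => if h : (j : ℕ) + k < q then some ⟨(j : ℕ) + k, h⟩ else none) ?_]
  · rw [← card_shift q k]
    apply Nat.card_congr (Equiv.subtypeEquivRight ?_)
    intro i
    constructor
    · rintro ⟨j, hj⟩
      by_cases hc : (j : ℕ) + k < q
      · rw [dif_pos hc] at hj
        have h2 : ((⟨(j : ℕ) + k, hc⟩ : Fin q) : ℕ) = (i : ℕ) :=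
          congrArg Fin.val (Option.some_inj.mp hj)
        simp only [Fin.val_mk] at h2
        omega
      · rw [dif_neg hc] at hj; cases hj
    · intro hi
      have hik := i.isLt
      have hc : ((i : ℕ) - k) + k < q := by omega
      refine ⟨⟨(i : ℕ) - k, by omega⟩, ?_⟩
      rw [dif_pos hc]
      exact congrArg some (Fin.ext (by simp; omega))
  · intro j i
    simp only [S, Matrix.of_apply]
    refine if_congr ?_ rfl rfl
    by_cases h : (j : ℕ) + k < q
    · rw [dif_pos h, Option.some_inj, Fin.ext_iff, Fin.val_mk]
      exact eq_comm
    · rw [dif_neg h]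
      constructor
      · intro hc; exact absurd hc (by have := i.isLt; omega)
      · intro hc; cases hc

def sumSubtype {α β : Type*} (pa : α → Prop) (pb : β → Prop) :
    {p : α ⊕ β // Sum.elim pa pb p} ≃ {a // pa a} ⊕ {b // pb b} where
  toFun x := match x with
    | ⟨.inl a, h⟩ => .inl ⟨a, h⟩
    | ⟨.inr b, h⟩ => .inr ⟨b, h⟩
  invFun x := match x with
    | .inl ⟨a, h⟩ => ⟨.inl a, h⟩
    | .inr ⟨b, h⟩ => ⟨.inr b, h⟩
  left_inv := by rintro ⟨a | b, h⟩ <;> rfl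
  right_inv := by rintro (⟨a, h⟩ | ⟨b, h⟩) <;> rfl

lemma rank_blockdiag (q x y : ℕ) :
    (Matrix.fromBlocks (S q x) 0 0 (S q y)).rank = (q - x) + (q - y) := by
  classical
  set f : Fin q ⊕ Fin q → Option (Fin q ⊕ Fin q) :=
    Sum.elim
      (fun j : Fin q => if h : (j : ℕ) + x < q then some (Sum.inl ⟨(j : ℕ) + x, h⟩) else none)
      (fun j : Fin q => if h : (j : ℕ) + y < q then some (Sum.inr ⟨(j : ℕ) + y, h⟩) else none)
    with hf
  rw [rank_eq_card (Matrix.fromBlocks (S q x) 0 0 (S q y)) f ?_]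
  · have key : ∀ p : Fin q ⊕ Fin q,
        (∃ j, f j = some p)
        ↔ Sum.elim (fun i : Fin q => x ≤ (i : ℕ)) (fun i : Fin q => y ≤ (i : ℕ)) p := by
      rintro (i | i) <;> constructor
      · rintro ⟨j | j, hj⟩ <;> simp only [hf, Sum.elim_inl, Sum.elim_inr] at hj
        · by_cases hc : (j : ℕ) + x < q
          · rw [dif_pos hc] at hj
            have h2 : (⟨(j : ℕ) + x, hc⟩ : Fin q) = i :=
              Sum.inl.inj (Option.some_inj.mp hj)
            have h3 : (j : ℕ) + x = (i : ℕ) := congrArg Fin.val h2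
            simp only [Sum.elim_inl]; omega
          · rw [dif_neg hc] at hj; cases hj
        · by_cases hc : (j : ℕ) + y < q
          · rw [dif_pos hc] at hj
            cases hj
          · rw [dif_neg hc] at hj; cases hj
      · intro hi
        simp only [Sum.elim_inl] at hi
        have hik := i.isLt
        have hc : ((i : ℕ) - x) + x < q := by omega
        refine ⟨Sum.inl ⟨(i : ℕ) - x, by omega⟩, ?_⟩
        simp only [hf, Sum.elim_inl]
        rw [dif_pos hc]
        exact congrArg some (congrArg Sum.inl (Fin.ext (by simp; omega)))
      · rintro ⟨j | j, hj⟩ <;> simp only [hf, Sum.elim_inl, Sum.elim_inr] at hj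
        · by_cases hc : (j : ℕ) + x < q
          · rw [dif_pos hc] at hj
            cases hj
          · rw [dif_neg hc] at hj; cases hj
        · by_cases hc : (j : ℕ) + y < q
          · rw [dif_pos hc] at hj
            have h2 : (⟨(j : ℕ) + y, hc⟩ : Fin q) = i :=
              Sum.inr.inj (Option.some_inj.mp hj)
            have h3 : (j : ℕ) + y = (i : ℕ) := congrArg Fin.val h2
            simp only [Sum.elim_inr]; omega
          · rw [dif_neg hc] at hj; cases hj
      · intro hi
        simp only [Sum.elim_inr] at hi
        have hik := i.isLt
        have hc : ((i : ℕ) - y) + y < q := by omega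
        refine ⟨Sum.inr ⟨(i : ℕ) - y, by omega⟩, ?_⟩
        simp only [hf, Sum.elim_inr]
        rw [dif_pos hc]
        exact congrArg some (congrArg Sum.inr (Fin.ext (by simp; omega)))
    rw [Nat.card_congr (Equiv.subtypeEquivRight key),
      Nat.card_congr (sumSubtype _ _), Nat.card_sum, card_shift, card_shift]
  · rintro (j | j) (i | i) <;>
      simp only [hf, Sum.elim_inl, Sum.elim_inr, Matrix.fromBlocks_apply₁₁,
        Matrix.fromBlocks_apply₁₂, Matrix.fromBlocks_apply₂₁, Matrix.fromBlocks_apply₂₂,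
        Matrix.zero_apply, S, Matrix.of_apply]
    · refine if_congr ?_ rfl rfl
      by_cases h : (j : ℕ) + x < q
      · rw [dif_pos h, Option.some_inj]
        constructor
        · intro hc
          exact congrArg Sum.inl (Fin.ext hc.symm)
        · intro hc
          exact (congrArg Fin.val (Sum.inl.inj hc)).symm
      · rw [dif_neg h]
        constructor
        · intro hc; exact absurd hc (by have := i.isLt; omega)
        · intro hc; cases hc
    · have hne : ¬ ((if h : (j : ℕ) + x < q then some (Sum.inl (⟨(j : ℕ) + x, h⟩ : Fin q))
          else none) = some (Sum.inr i)) := by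
        by_cases h : (j : ℕ) + x < q
        · rw [dif_pos h]
          intro hc
          cases hc
        · rw [dif_neg h]
          exact fun hc => by cases hc
      rw [if_neg hne]
    · have hne : ¬ ((if h : (j : ℕ) + y < q then some (Sum.inr (⟨(j : ℕ) + y, h⟩ : Fin q))
          else none) = some (Sum.inl i)) := by
        by_cases h : (j : ℕ) + y < q
        · rw [dif_pos h]
          intro hc
          cases hc
        · rw [dif_neg h]
          exact fun hc => by cases hc
      rw [if_neg hne]
    · refine if_congr ?_ rfl rfl
      by_cases h : (j : ℕ) + y < q
      · rw [dif_pos h, Option.some_inj]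
        constructor
        · intro hc
          exact congrArg Sum.inr (Fin.ext hc.symm)
        · intro hc
          exact (congrArg Fin.val (Sum.inr.inj hc)).symm
      · rw [dif_neg h]
        constructor
        · intro hc; exact absurd hc (by have := i.isLt; omega)
        · intro hc; cases hc

end RBTS

open RBTS

theorem rank_block_triangular_shift (q m11 m12 m22 : ℕ)
    (h1 : m11 ≤ q) (h2 : m12 ≤ q) (h3 : m22 ≤ q)
    (J : Matrix (Fin q) (Fin q) (ZMod 2))
    (hJ : ∀ i j : Fin q, J i j = if (i : ℕ) = (j : ℕ) + 1 then 1 else 0) :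
    (Matrix.fromBlocks (J ^ (q - m11)) (J ^ (q - m12)) 0 (J ^ (q - m22))).rank
      = max (m11 + m22) m12 := by
  classical
  set a := q - m11 with ha
  set b := q - m12 with hb
  set c := q - m22 with hc
  rw [J_pow q J hJ a, J_pow q J hJ b, J_pow q J hJ c]
  by_cases hcase1 : m12 ≤ m11
  · -- column operation: clear the top-right block
    have hU : IsUnit (Matrix.fromBlocks (1 : Matrix (Fin q) (Fin q) (ZMod 2))
        (S q (b - a)) 0 1).det := by
      simp [Matrix.det_fromBlocks_zero₂₁]
    have hkey : Matrix.fromBlocks (S q a) (S q b) 0 (S q c)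
        * Matrix.fromBlocks (1 : Matrix (Fin q) (Fin q) (ZMod 2)) (S q (b - a)) 0 1
        = Matrix.fromBlocks (S q a) 0 0 (S q c) := by
      rw [Matrix.fromBlocks_multiply]
      have e1 : (b - a) + a = b := by omega
      simp only [Matrix.mul_one, Matrix.one_mul, Matrix.mul_zero, Matrix.zero_mul,
        add_zero, zero_add, S_mul, e1]
      rw [RBTS.add_self]
    rw [← Matrix.rank_mul_eq_left_of_isUnit_det _ _ hU, hkey, rank_blockdiag]
    omega
  · by_cases hcase2 : m12 ≤ m22
    · -- row operation: clear the top-right block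
      have hU : IsUnit (Matrix.fromBlocks (1 : Matrix (Fin q) (Fin q) (ZMod 2))
          (S q (b - c)) 0 1).det := by
        simp [Matrix.det_fromBlocks_zero₂₁]
      have hkey : Matrix.fromBlocks (1 : Matrix (Fin q) (Fin q) (ZMod 2)) (S q (b - c)) 0 1
          * Matrix.fromBlocks (S q a) (S q b) 0 (S q c)
          = Matrix.fromBlocks (S q a) 0 0 (S q c) := by
        rw [Matrix.fromBlocks_multiply]
        have e1 : c + (b - c) = b := by omega
        simp only [Matrix.mul_one, Matrix.one_mul, Matrix.mul_zero, Matrix.zero_mul,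
          add_zero, zero_add, S_mul, e1]
        rw [add_comm, RBTS.add_self]
      rw [← Matrix.rank_mul_eq_right_of_isUnit_det _ _ hU, hkey, rank_blockdiag]
      omega
    · -- m11 < m12 and m22 < m12
      push_neg at hcase1 hcase2
      set M := Matrix.fromBlocks (S q a) (S q b) 0 (S q c) with hM
      set U1 := Matrix.fromBlocks (1 : (Matrix (Fin q) (Fin q) (ZMod 2))) (0 : (Matrix (Fin q) (Fin q) (ZMod 2))) (S q (a - b)) (1 : (Matrix (Fin q) (Fin q) (ZMod 2)))
        with hU1def
      set W := Matrix.fromBlocks (0 : Matrix (Fin q) (Fin q) (ZMod 2)) (1 : Matrix (Fin q) (Fin q) (ZMod 2)) (1 : Matrix (Fin q) (Fin q) (ZMod 2)) (0 : Matrix (Fin q) (Fin q) (ZMod 2)) with hWdef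
      set L := Matrix.fromBlocks (1 : Matrix (Fin q) (Fin q) (ZMod 2)) (0 : Matrix (Fin q) (Fin q) (ZMod 2)) (S q (c - b)) (1 : Matrix (Fin q) (Fin q) (ZMod 2))
        with hLdef
      have hU1 : IsUnit U1.det := by
        rw [hU1def]; simp [Matrix.det_fromBlocks_zero₁₂]
      have hWW : W * W = 1 := by
        rw [hWdef, Matrix.fromBlocks_multiply]
        simp [Matrix.fromBlocks_one]
      have hW : IsUnit W.det := by
        refine IsUnit.of_mul_eq_one (a := W.det) W.det ?_
        rw [← Matrix.det_mul, hWW, Matrix.det_one]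
      have hL : IsUnit L.det := by
        rw [hLdef]; simp [Matrix.det_fromBlocks_zero₁₂]
      have e1 : (a - b) + b = a := by omega
      have e2 : b + (c - b) = c := by omega
      have s1 : M * U1 = Matrix.fromBlocks 0 (S q b) (S q (a - b + c)) (S q c) := by
        rw [hM, hU1def, Matrix.fromBlocks_multiply]
        simp only [Matrix.mul_one, Matrix.one_mul, Matrix.mul_zero, Matrix.zero_mul,
          add_zero, zero_add, S_mul, e1]
        rw [RBTS.add_self]
      have s2 : Matrix.fromBlocks (0 : Matrix (Fin q) (Fin q) (ZMod 2)) (S q b)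
            (S q (a - b + c)) (S q c) * W
          = Matrix.fromBlocks (S q b) 0 (S q c) (S q (a - b + c)) := by
        rw [hWdef, Matrix.fromBlocks_multiply]
        simp
      have s3 : L * Matrix.fromBlocks (S q b) (0 : Matrix (Fin q) (Fin q) (ZMod 2))
            (S q c) (S q (a - b + c))
          = Matrix.fromBlocks (S q b) 0 0 (S q (a - b + c)) := by
        rw [hLdef, Matrix.fromBlocks_multiply]
        simp only [Matrix.mul_one, Matrix.one_mul, Matrix.mul_zero, Matrix.zero_mul,
          add_zero, zero_add, S_mul, e2]
        rw [add_comm (S q c), RBTS.add_self]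
      have hrank : M.rank = (Matrix.fromBlocks (S q b) 0 0 (S q (a - b + c))).rank := by
        rw [← s3, Matrix.rank_mul_eq_right_of_isUnit_det _ _ hL, ← s2,
          Matrix.rank_mul_eq_left_of_isUnit_det _ _ hW, ← s1,
          Matrix.rank_mul_eq_left_of_isUnit_det _ _ hU1]
      rw [hrank, rank_blockdiag]
      omega
end
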